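/- Let I1 = (F, C, d, c, r) be a UTMC instance with costs satisfying the four-point metric inequality, and let I2 be the associated UFL instance of the metric UTMC-to-UFL reduction. Then for every feasible UFL solution (x', z') of I2 there exists a feasible UTMC solution (x, z) of I1 whose objective value is at most the objective value of (x', z'). -/

import Mathlib

/-- metric UTMC-to-UFL reduction, backward direction.
Every feasible UFL solution of `I2` yields a feasible UTMC solution of `I1`
with objective value at most that of the UFL solution. -/
theorem stmt_14 {F C : Type} [Fintype F] [Fintype C] [Nonempty F] [Nonempty C]
    -- UTMC instance I1 = (F, C, d, c, r)
    (d : C → ℕ) (c : F → C → ℝ) (r : C → ℕ)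
    (hc_nonneg : ∀ i j, 0 ≤ c i j)
    (hc_metric : ∀ (i0 i1 : F) (j0 j1 : C), c i0 j0 ≤ c i0 j1 + c i1 j1 + c i1 j0)
    -- UFL instance I2 on facility set F ⊕ C given by the reduction
    (f' : F ⊕ C → ℕ) (c' : F ⊕ C → C → ℝ)
    (hf'F : ∀ i : F, f' (Sum.inl i) = 0)
    (hf'C : ∀ j : C, f' (Sum.inr j) = r j)
    (hc'F : ∀ (i : F) (j : C), c' (Sum.inl i) j = c i j)
    (hc'diag : ∀ j : C, c' (Sum.inr j) j = 0)
    (hc'off : ∀ j j0 : C, j0 ≠ j →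
      c' (Sum.inr j) j0 =
        Finset.univ.inf' Finset.univ_nonempty (fun i : F => c i j0 + c i j))
    -- a feasible UFL solution (x', z') of I2
    (x' : F ⊕ C → C → ℝ) (z' : F ⊕ C → ℝ)
    (hx' : ∀ i' j, 0 ≤ x' i' j)
    (hz' : ∀ i', z' i' = 0 ∨ z' i' = 1)
    (hdem' : ∀ j, ∑ i', x' i' j = (d j : ℝ))
    (hopen' : ∀ i' j, z' i' = 0 → x' i' j = 0) :
    -- there is a feasible UTMC solution (x, z) of I1 with objective value at most that of (x', z')
    ∃ (x : F → C → ℝ) (z : C → ℝ),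
      (∀ i j, 0 ≤ x i j) ∧
      (∀ j, z j = 0 ∨ z j = 1) ∧
      (∀ j, ∑ i, x i j = (1 - z j) * (d j : ℝ)) ∧
      (∑ i, ∑ j, c i j * x i j) + (∑ j, (r j : ℝ) * z j)
        ≤ (∑ i', ∑ j, c' i' j * x' i' j) + (∑ i', (f' i' : ℝ) * z' i') := by
  classical
  have hmin : ∀ j0 j : C, ∃ i : F,
      Finset.univ.inf' Finset.univ_nonempty (fun i : F => c i j + c i j0)
        = c i j + c i j0 := by
    intro j0 j
    obtain ⟨i, _, hi⟩ := Finset.exists_mem_eq_inf' Finset.univ_nonempty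
      (fun i : F => c i j + c i j0)
    exact ⟨i, hi⟩
  choose g hg using hmin
  set z : C → ℝ := fun j => z' (Sum.inr j) with hzdef
  set x : F → C → ℝ := fun i j =>
    (1 - z j) * (x' (Sum.inl i) j + ∑ j0, if i = g j0 j then x' (Sum.inr j0) j else 0)
    with hxdef
  have hz01 : ∀ j, z j = 0 ∨ z j = 1 := fun j => hz' _
  have h1z : ∀ j, 0 ≤ 1 - z j := by intro j; rcases hz01 j with h|h <;> simp [h]
  have h1z1 : ∀ j, 1 - z j ≤ 1 := by
    intro j; rcases hz01 j with h|h <;> simp [h]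
  have hinner : ∀ i j, 0 ≤ x' (Sum.inl i) j + ∑ j0, if i = g j0 j then x' (Sum.inr j0) j else 0 := by
    intro i j
    apply add_nonneg (hx' _ _)
    apply Finset.sum_nonneg
    intro j0 _
    split
    · exact hx' _ _
    · exact le_refl 0
  refine ⟨x, z, ?_, hz01, ?_, ?_⟩
  · intro i j
    exact mul_nonneg (h1z j) (hinner i j)
  · intro j
    simp only [hxdef]
    rw [← Finset.mul_sum]
    congr 1
    rw [Finset.sum_add_distrib, Finset.sum_comm]
    have h2 : ∀ j0 : C, (∑ i, if i = g j0 j then x' (Sum.inr j0) j else 0)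
        = x' (Sum.inr j0) j := by
      intro j0
      rw [Finset.sum_ite_eq' Finset.univ (g j0 j) (fun _ => x' (Sum.inr j0) j)]
      simp
    simp only [h2]
    rw [← Fintype.sum_sum_type (fun i' => x' i' j)]
    exact hdem' j
  · -- objective
    have hpen : (∑ j, (r j : ℝ) * z j) = ∑ i', (f' i' : ℝ) * z' i' := by
      rw [Fintype.sum_sum_type (fun i' => (f' i' : ℝ) * z' i')]
      simp [hf'F, hf'C, hzdef]
    rw [hpen]
    apply add_le_add_left
    -- cost inequality
    rw [Fintype.sum_sum_type (fun i' => ∑ j, c' i' j * x' i' j)]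
    have hzx' : ∀ j0 j : C, (1 - z j) * (c (g j0 j) j * x' (Sum.inr j0) j)
        ≤ c' (Sum.inr j0) j * x' (Sum.inr j0) j := by
      intro j0 j
      by_cases hjj : j = j0
      · subst hjj
        rw [hc'diag, zero_mul]
        rcases hz' (Sum.inr j) with h|h
        · rw [hopen' _ _ h]; simp
        · have : (1 - z j) = 0 := by simp [hzdef, h]
          rw [this, zero_mul]
      · have hoff := hc'off j0 j hjj
        rw [hoff]
        calc (1 - z j) * (c (g j0 j) j * x' (Sum.inr j0) j)
            ≤ 1 * (c (g j0 j) j * x' (Sum.inr j0) j) := by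
              apply mul_le_mul_of_nonneg_right (h1z1 j)
              exact mul_nonneg (hc_nonneg _ _) (hx' _ _)
          _ = c (g j0 j) j * x' (Sum.inr j0) j := one_mul _
          _ ≤ (c (g j0 j) j + c (g j0 j) j0) * x' (Sum.inr j0) j := by
              apply mul_le_mul_of_nonneg_right _ (hx' _ _)
              linarith [hc_nonneg (g j0 j) j0]
          _ = (Finset.univ.inf' Finset.univ_nonempty
                (fun i : F => c i j + c i j0)) * x' (Sum.inr j0) j := by
              rw [hg j0 j]
    calc ∑ i, ∑ j, c i j * x i j
        = (∑ i, ∑ j, (1 - z j) * (c i j * x' (Sum.inl i) j))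
          + ∑ j, ∑ j0, (1 - z j) * (c (g j0 j) j * x' (Sum.inr j0) j) := by
          simp only [hxdef]
          have step1 : ∀ i : F, ∀ j : C,
              c i j * ((1 - z j) * (x' (Sum.inl i) j
                + ∑ j0, if i = g j0 j then x' (Sum.inr j0) j else 0))
              = (1 - z j) * (c i j * x' (Sum.inl i) j)
                + ∑ j0, if i = g j0 j
                    then (1 - z j) * (c i j * x' (Sum.inr j0) j) else 0 := by
            intro i j
            have hS : (1 - z j) * (c i j * ∑ j0, (if i = g j0 j then x' (Sum.inr j0) j else 0))
                = ∑ j0, if i = g j0 j then (1 - z j) * (c i j * x' (Sum.inr j0) j) else 0 := by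
              rw [Finset.mul_sum, Finset.mul_sum]
              apply Finset.sum_congr rfl
              intro j0 _
              split <;> ring
            rw [← hS]
            ring
          simp only [step1, Finset.sum_add_distrib]
          congr 1
          rw [Finset.sum_comm]
          apply Finset.sum_congr rfl
          intro j _
          rw [Finset.sum_comm]
          apply Finset.sum_congr rfl
          intro j0 _
          rw [Finset.sum_ite_eq' Finset.univ (g j0 j)
            (fun i => (1 - z j) * (c i j * x' (Sum.inr j0) j))]
          simp
      _ ≤ (∑ i, ∑ j, c' (Sum.inl i) j * x' (Sum.inl i) j)
          + ∑ j0, ∑ j, c' (Sum.inr j0) j * x' (Sum.inr j0) j := by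
          apply add_le_add
          · apply Finset.sum_le_sum; intro i _
            apply Finset.sum_le_sum; intro j _
            rw [hc'F]
            calc (1 - z j) * (c i j * x' (Sum.inl i) j)
                ≤ 1 * (c i j * x' (Sum.inl i) j) :=
                  mul_le_mul_of_nonneg_right (h1z1 j)
                    (mul_nonneg (hc_nonneg _ _) (hx' _ _))
              _ = c i j * x' (Sum.inl i) j := one_mul _
          · rw [Finset.sum_comm]
            apply Finset.sum_le_sum; intro j0 _
            apply Finset.sum_le_sum; intro j _
            exact hzx' j0 j
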